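/- Let λ ∈ ℤ_{≥0}ⁿ with coordinates in the ε-basis b_1 ≥ ... ≥ b_n ≥ 0, and write b_i = p_i·k + r_i with 0 ≤ r_i < k (here b_i = Σ_{ℓ≥i} a_ℓ in the ω-basis). Define λ_j = Σ_{i=1}^n m^{i,j} ε_i where m^{i,j} = p_i + 1 if j ≤ r_i and p_i otherwise. Then λ̄^max = (λ_1,...,λ_k) lies in 𝒫⁺(λ,k), i.e., each λ_j is dominant (m^{i,j} ≥ m^{i+1,j} for all i) and λ_1 + ... + λ_k = λ. -/

import Mathlib

lemma stmt_10_aux (k : ℕ) (hk : 0 < k) (j : ℕ) (hj : j < k) (b : ℕ) :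
    b / k + (if j < b % k then 1 else 0) = (b + (k - 1 - j)) / k := by
  conv_rhs => rw [← Nat.div_add_mod b k, add_assoc, Nat.mul_add_div hk]
  congr 1
  have h1 : b % k < k := Nat.mod_lt _ hk
  rcases lt_or_ge j (b % k) with h | h
  · rw [if_pos h]
    have : (b % k + (k - 1 - j)) / k = 1 := by
      apply Nat.div_eq_of_lt_le <;> omega
    omega
  · rw [if_neg (by omega)]
    have : (b % k + (k - 1 - j)) / k = 0 := Nat.div_eq_of_lt (by omega)
    omega

theorem stmt_10 (n k : ℕ) (hk : 0 < k) (a : Fin n → ℕ)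
    -- `B i = Σ_{ℓ ≥ i} a_ℓ`, the `i`-th ε-coordinate of `λ` (0-indexed)
    (B : ℕ → ℕ) (hB : ∀ i, B i = ∑ l ∈ Finset.univ.filter (fun l : Fin n => i ≤ (l : ℕ)), a l)
    -- `m i j = p_i + 1` if `j ≤ r_i` and `p_i` otherwise, where `B i = p_i k + r_i`
    (m : ℕ → Fin k → ℕ)
    (hm : ∀ i (j : Fin k), m i j = B i / k + if (j : ℕ) < B i % k then 1 else 0) :
    (∀ j : Fin k, ∀ i i' : ℕ, i ≤ i' → m i' j ≤ m i j) ∧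
      ∀ i : ℕ, ∑ j : Fin k, m i j = B i := by
  have hBmono : ∀ i i' : ℕ, i ≤ i' → B i' ≤ B i := by
    intro i i' hii
    rw [hB, hB]
    apply Finset.sum_le_sum_of_subset
    intro l hl
    simp only [Finset.mem_filter, Finset.mem_univ, true_and] at hl ⊢
    omega
  constructor
  · intro j i i' hii
    rw [hm, hm, stmt_10_aux k hk j j.isLt, stmt_10_aux k hk j j.isLt]
    exact Nat.div_le_div_right (by have := hBmono i i' hii; omega)
  · intro i
    have hsum : ∑ j : Fin k, m i j
        = ∑ j ∈ Finset.range k, (B i / k + if j < B i % k then 1 else 0) := by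
      rw [Finset.sum_range fun j => B i / k + if j < B i % k then 1 else 0]
      exact Finset.sum_congr rfl fun j _ => hm i j
    rw [hsum, Finset.sum_add_distrib, Finset.sum_const, Finset.card_range, smul_eq_mul]
    have h1 : B i % k < k := Nat.mod_lt _ hk
    have h2 : ∑ j ∈ Finset.range k, (if j < B i % k then 1 else 0) = B i % k := by
      rw [← Finset.sum_subset (Finset.range_subset_range.mpr h1.le)
        (fun x _ hx => by simp only [Finset.mem_range] at hx; rw [if_neg (by omega)])]
      rw [Finset.sum_congr rfl fun x hx => if_pos (Finset.mem_range.mp hx),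
        Finset.sum_const, Finset.card_range, smul_eq_mul, mul_one]
    rw [h2]
    have := Nat.div_add_mod (B i) k
    omega
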